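/- If all p-segments of X^p have width 1 (i.e., all p-prefixes of suffixes are pairwise distinct under the ≺_p tie-breaking), then X^{p+1} = X^p, and by induction X^q = X^p for all q ≥ p; in particular X^p equals the fully sorted suffix array X. -/

import Mathlib

open scoped Classical

/-- Symbol type for suffixes: ranked sentinels (ordered by (suffix length, string index))
below all regular alphabet symbols. -/
abbrev SSym (A : Type*) := (ℕ ×ₗ ℕ) ⊕ₗ A

variable {A : Type*} [LinearOrder A] {m k : ℕ}

/-- `symAt s (q, l) t` is the `t`-th symbol (0-indexed) of the `l`-suffix of the
string `s q` (a string of length `k`), padded beyond its end with its own ranked sentinel. -/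
def symAt (s : Fin m → Fin k → A) (o : Fin m × Fin (k+1)) (t : ℕ) : SSym A :=
  if _h : t < (o.2 : ℕ) then
    toLex (Sum.inr (s o.1 ⟨k - (o.2 : ℕ) + t, by have := o.2.isLt; omega⟩))
  else
    toLex (Sum.inl (toLex ((o.2 : ℕ), (o.1 : ℕ))))

/-- The `p`-prefix of the suffix occurrence `o`. -/
def pprefix (s : Fin m → Fin k → A) (p : ℕ) (o : Fin m × Fin (k+1)) : List (SSym A) :=
  List.ofFn fun t : Fin p => symAt s o t

/-- The full suffix string of occurrence `o` (its `l` symbols followed by its sentinel). -/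
def suffStr (s : Fin m → Fin k → A) (o : Fin m × Fin (k+1)) : List (SSym A) :=
  List.ofFn fun t : Fin ((o.2 : ℕ) + 1) => symAt s o t

/-- The order `≺_p`: compare `p`-prefixes lexicographically, then suffix lengths,
then string indices. -/
def precP (s : Fin m → Fin k → A) (p : ℕ) (α β : Fin m × Fin (k+1)) : Prop :=
  List.Lex (· < ·) (pprefix s p α) (pprefix s p β) ∨
    (pprefix s p α = pprefix s p β ∧
      ((α.2 : ℕ) < (β.2 : ℕ) ∨ ((α.2 : ℕ) = (β.2 : ℕ) ∧ (α.1 : ℕ) < (β.1 : ℕ))))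

/-- Full lexicographic order on suffix occurrences, ties broken by length then string index. -/
def fullOrd (s : Fin m → Fin k → A) (α β : Fin m × Fin (k+1)) : Prop :=
  List.Lex (· < ·) (suffStr s α) (suffStr s β) ∨
    (suffStr s α = suffStr s β ∧
      ((α.2 : ℕ) < (β.2 : ℕ) ∨ ((α.2 : ℕ) = (β.2 : ℕ) ∧ (α.1 : ℕ) < (β.1 : ℕ))))

/-- `[b,e]` is the `p`-segment of position `i` in the sorted array `X`:
a position `j` carries the same `p`-prefix as position `i` iff `b ≤ j ≤ e`. -/
def isSeg (s : Fin m → Fin k → A) (p : ℕ) {n : ℕ}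
    (X : Fin n → Fin m × Fin (k+1)) (b e i : Fin n) : Prop :=
  b ≤ i ∧ i ≤ e ∧ ∀ j, (pprefix s p (X j) = pprefix s p (X i) ↔ b ≤ j ∧ j ≤ e)

/-- Position `i` is the start of its `p`-segment in the sorted array `X`. -/
def isStart (s : Fin m → Fin k → A) (p : ℕ) {n : ℕ}
    (X : Fin n → Fin m × Fin (k+1)) (i : Fin n) : Prop :=
  ∀ j, j < i → pprefix s p (X j) ≠ pprefix s p (X i)

section Aux

variable {C : Type*} [LinearOrder C]

private lemma lex_cons_ne {x y : C} (hxy : x ≠ y) (L M : List C) :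
    List.Lex (· < ·) (x :: L) (y :: M) ↔ x < y := by
  constructor
  · intro h
    cases h with
    | cons h => exact absurd rfl hxy
    | rel h => exact h
  · exact List.Lex.rel

private lemma lex_ofFn_iff :
    ∀ (t₀ : ℕ) (f g : ℕ → C), (∀ u < t₀, f u = g u) → f t₀ ≠ g t₀ →
    ∀ a b : ℕ, t₀ < a → t₀ < b →
    (List.Lex (· < ·) (List.ofFn fun i : Fin a => f i) (List.ofFn fun i : Fin b => g i) ↔
      f t₀ < g t₀) := by
  intro t₀
  induction t₀ with
  | zero =>
    intro f g _ hne a b ha hb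
    obtain ⟨a, rfl⟩ := Nat.exists_eq_succ_of_ne_zero (by omega : a ≠ 0)
    obtain ⟨b, rfl⟩ := Nat.exists_eq_succ_of_ne_zero (by omega : b ≠ 0)
    rw [List.ofFn_succ, List.ofFn_succ]
    simpa using lex_cons_ne hne _ _
  | succ t ih =>
    intro f g heq hne a b ha hb
    obtain ⟨a, rfl⟩ := Nat.exists_eq_succ_of_ne_zero (by omega : a ≠ 0)
    obtain ⟨b, rfl⟩ := Nat.exists_eq_succ_of_ne_zero (by omega : b ≠ 0)
    rw [List.ofFn_succ, List.ofFn_succ]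
    have h0 : f 0 = g 0 := heq 0 (Nat.succ_pos t)
    have key := ih (fun u => f (u + 1)) (fun u => g (u + 1))
      (fun u hu => heq (u + 1) (by omega)) hne a b (by omega) (by omega)
    simp only [Fin.val_zero, Fin.val_succ, h0]
    rw [List.lex_cons_iff]
    simpa using key

private lemma ofFn_ne (f g : ℕ → C) (t₀ a b : ℕ) (h : f t₀ ≠ g t₀)
    (ha : t₀ < a) (hb : t₀ < b) :
    (List.ofFn fun i : Fin a => f i) ≠ (List.ofFn fun i : Fin b => g i) := by
  intro hEq
  apply h
  have := congrArg (fun L : List C => L[t₀]?) hEq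
  simpa [List.getElem?_ofFn, ha, hb] using this

private lemma strictMono_surj_id {n : ℕ} (σ : Fin n → Fin n) (hmono : StrictMono σ)
    (hsurj : Function.Surjective σ) : σ = id := by
  haveI : WellFoundedLT (Fin n) := Finite.to_wellFoundedLT
  have hbij : Function.Bijective σ := ⟨hmono.injective, hsurj⟩
  set e := Equiv.ofBijective σ hbij with he
  have hτ : StrictMono (e.symm : Fin n → Fin n) := by
    intro a b hab
    rcases lt_trichotomy (e.symm a) (e.symm b) with h | h | h
    · exact h
    · exact absurd (congrArg e h) (by simpa using hab.ne)
    · have := hmono h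
      have hea : ∀ c, σ (e.symm c) = c := fun c => e.apply_symm_apply c
      rw [hea, hea] at this
      exact absurd this (not_lt.2 hab.le)
  funext i
  have h1 : i ≤ σ i := hmono.le_apply
  have h2 : σ i ≤ i := by
    have := hτ.le_apply (x := σ i)
    have hs : e.symm (σ i) = i := e.symm_apply_apply i
    calc σ i ≤ e.symm (σ i) := this
    _ = i := hs
  exact le_antisymm h2 h1

private lemma sorted_unique {n : ℕ} {γ : Type*} (R Q : γ → γ → Prop) (Y Z : Fin n → γ)
    (hY : Function.Bijective Y) (hZ : Function.Bijective Z)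
    (hsZ : ∀ i j, i < j → Q (Z i) (Z j))
    (hsY : ∀ i j, i < j → R (Y i) (Y j))
    (hRQ : ∀ a b, a ≠ b → R a b → Q a b)
    (hasym : ∀ a b, a ≠ b → ¬(Q a b ∧ Q b a)) : ∀ i, Y i = Z i := by
  set e := Equiv.ofBijective Z hZ with he
  set σ : Fin n → Fin n := fun i => e.symm (Y i) with hσ
  have hZσ : ∀ i, Z (σ i) = Y i := fun i => e.apply_symm_apply (Y i)
  have hmono : StrictMono σ := by
    intro i j hij
    have hne : Y i ≠ Y j := fun h => absurd (hY.injective h) (ne_of_lt hij)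
    have hQ : Q (Y i) (Y j) := hRQ _ _ hne (hsY i j hij)
    rcases lt_trichotomy (σ i) (σ j) with h | h | h
    · exact h
    · exact absurd (congrArg Z h) (by rw [hZσ, hZσ]; exact hne)
    · exfalso
      have hQ' : Q (Z (σ j)) (Z (σ i)) := hsZ _ _ h
      rw [hZσ, hZσ] at hQ'
      exact hasym _ _ hne ⟨hQ, hQ'⟩
  have hσsurj : Function.Surjective σ := (e.symm.bijective.comp hY).surjective
  have hid : σ = id := strictMono_surj_id σ hmono hσsurj
  intro i
  rw [← hZσ i, hid, id]

private lemma exists_diff (s : Fin m → Fin k → A) {α β : Fin m × Fin (k+1)} (h : α ≠ β) :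
    ∃ t, symAt s α t ≠ symAt s β t ∧ t ≤ min (α.2 : ℕ) (β.2 : ℕ) := by
  rcases lt_trichotomy (α.2 : ℕ) (β.2 : ℕ) with hl | hl | hl
  · refine ⟨(α.2 : ℕ), ?_, by omega⟩
    simp only [symAt, lt_irrefl, dif_neg, not_lt, le_refl, hl, dif_pos]
    intro hc
    exact absurd (toLex.injective hc) (by simp)
  · have hidx : (α.1 : ℕ) ≠ (β.1 : ℕ) := by
      intro hc
      exact h (Prod.ext (Fin.ext hc) (Fin.ext hl))
    refine ⟨(α.2 : ℕ), ?_, by omega⟩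
    simp only [symAt, lt_irrefl, dif_neg, not_lt, le_refl, hl, lt_irrefl, dif_neg]
    intro hc
    have := toLex.injective hc
    rw [Sum.inl.injEq] at this
    have := toLex.injective this
    exact hidx (congrArg Prod.snd this)
  · refine ⟨(β.2 : ℕ), ?_, by omega⟩
    simp only [symAt, lt_irrefl, dif_neg, not_lt, le_refl, hl, dif_pos]
    intro hc
    exact absurd (toLex.injective hc) (by simp)

private lemma key_lemma (s : Fin m → Fin k → A) (p : ℕ)
    (hdist : ∀ α β : Fin m × Fin (k+1), α ≠ β → pprefix s p α ≠ pprefix s p β)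
    {α β : Fin m × Fin (k+1)} (hne : α ≠ β) :
    ∃ u v : SSym A, u ≠ v ∧
      (∀ q, p ≤ q → (precP s q α β ↔ u < v)) ∧
      (∀ q, p ≤ q → (precP s q β α ↔ v < u)) ∧
      (fullOrd s α β ↔ u < v) ∧ (fullOrd s β α ↔ v < u) := by
  have hP : ∃ t, symAt s α t ≠ symAt s β t := by
    obtain ⟨t, ht, _⟩ := exists_diff s hne
    exact ⟨t, ht⟩
  set t₀ := Nat.find hP with ht₀
  have hne₀ : symAt s α t₀ ≠ symAt s β t₀ := Nat.find_spec hP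
  have hlt : ∀ u < t₀, symAt s α u = symAt s β u := by
    intro u hu
    have := Nat.find_min hP hu
    exact not_not.1 this
  have hmin : t₀ ≤ min (α.2 : ℕ) (β.2 : ℕ) := by
    obtain ⟨t, ht, htm⟩ := exists_diff s hne
    exact le_trans (Nat.find_min' hP ht) htm
  have htp : t₀ < p := by
    by_contra hc
    push_neg at hc
    apply hdist α β hne
    unfold pprefix
    exact congrArg List.ofFn (funext fun t : Fin p => hlt t (lt_of_lt_of_le t.isLt hc))
  have gen : ∀ (f g : ℕ → SSym A), (∀ u' < t₀, f u' = g u') → f t₀ ≠ g t₀ →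
      ∀ a b : ℕ, t₀ < a → t₀ < b → ∀ c : Prop,
      ((List.Lex (· < ·) (List.ofFn fun i : Fin a => f i) (List.ofFn fun i : Fin b => g i) ∨
        ((List.ofFn fun i : Fin a => f i) = (List.ofFn fun i : Fin b => g i) ∧ c)) ↔
        f t₀ < g t₀) := by
    intro f g h1 h2 a b ha hb c
    constructor
    · rintro (h | ⟨h, -⟩)
      · exact (lex_ofFn_iff t₀ f g h1 h2 a b ha hb).1 h
      · exact absurd h (ofFn_ne f g t₀ a b h2 ha hb)
    · intro h
      exact Or.inl ((lex_ofFn_iff t₀ f g h1 h2 a b ha hb).2 h)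
  have hlt' : ∀ u < t₀, symAt s β u = symAt s α u := fun u hu => (hlt u hu).symm
  have hne₀' : symAt s β t₀ ≠ symAt s α t₀ := Ne.symm hne₀
  refine ⟨symAt s α t₀, symAt s β t₀, hne₀, ?_, ?_, ?_, ?_⟩
  · intro q hq
    exact gen _ _ hlt hne₀ q q (by omega) (by omega) _
  · intro q hq
    exact gen _ _ hlt' hne₀' q q (by omega) (by omega) _
  · exact gen _ _ hlt hne₀ ((α.2 : ℕ) + 1) ((β.2 : ℕ) + 1) (by omega) (by omega) _
  · exact gen _ _ hlt' hne₀' ((β.2 : ℕ) + 1) ((α.2 : ℕ) + 1) (by omega) (by omega) _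

end Aux

/-- If all `p`-segments of `X^p` have width `1` (all `p`-prefixes of
suffixes are pairwise distinct), then `X^{p+1} = X^p`, by induction `X^q = X^p` for all
`q ≥ p`, and in particular `X^p` equals the fully sorted suffix array `X`. -/
theorem stable_after_singleton_segments (s : Fin m → Fin k → A)
    (X : ℕ → Fin ((k + 1) * m) → Fin m × Fin (k + 1))
    (hbij : ∀ p, Function.Bijective (X p))
    (hsort : ∀ p i j, i < j → precP s p (X p i) (X p j))
    (x : Fin ((k + 1) * m) → Fin m × Fin (k + 1))
    (hxbij : Function.Bijective x)
    (hxsort : ∀ i j, i < j → fullOrd s (x i) (x j))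
    (p : ℕ)
    (hwidth : ∀ i j, pprefix s p (X p i) = pprefix s p (X p j) → i = j) :
    (∀ i, X (p + 1) i = X p i) ∧
    (∀ q, p ≤ q → ∀ i, X q i = X p i) ∧
    (∀ i, X p i = x i) := by
  have hdist : ∀ α β : Fin m × Fin (k+1), α ≠ β → pprefix s p α ≠ pprefix s p β := by
    intro α β hab hpre
    obtain ⟨i, rfl⟩ := (hbij p).surjective α
    obtain ⟨j, rfl⟩ := (hbij p).surjective β
    exact hab (congrArg (X p) (hwidth i j hpre))
  have hasymP : ∀ a b : Fin m × Fin (k+1), a ≠ b → ¬(precP s p a b ∧ precP s p b a) := by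
    intro a b hab ⟨h1, h2⟩
    obtain ⟨u, v, huv, hq1, hq2, -, -⟩ := key_lemma s p hdist hab
    exact lt_asymm ((hq1 p le_rfl).1 h1) ((hq2 p le_rfl).1 h2)
  have main : ∀ q, p ≤ q → ∀ i, X q i = X p i := by
    intro q hq
    refine sorted_unique (precP s q) (precP s p) (X q) (X p) (hbij q) (hbij p)
      (hsort p) (hsort q) ?_ hasymP
    intro a b hab hR
    obtain ⟨u, v, huv, hq1, -, -, -⟩ := key_lemma s p hdist hab
    exact (hq1 p le_rfl).2 ((hq1 q hq).1 hR)
  refine ⟨main (p + 1) (by omega), main, ?_⟩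
  refine sorted_unique (precP s p) (fullOrd s) (X p) x (hbij p) hxbij hxsort (hsort p) ?_ ?_
  · intro a b hab hR
    obtain ⟨u, v, huv, hq1, -, hf1, -⟩ := key_lemma s p hdist hab
    exact hf1.2 ((hq1 p le_rfl).1 hR)
  · intro a b hab ⟨h1, h2⟩
    obtain ⟨u, v, huv, -, -, hf1, hf2⟩ := key_lemma s p hdist hab
    exact lt_asymm (hf1.1 h1) (hf2.1 h2)
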